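/- For every real t ≥ 0, the cumulative distribution function of the GRL distribution satisfies ∫_{0}^{t} f(u) du = 1 − (1/(λ−1)) · (λ − 1 + t^α/λ) · exp(−t^α/λ). -/

import Mathlib

open Real MeasureTheory

/-- The CDF of the GRL distribution. -/
theorem grl_cdf (lam α : ℝ) (hlam : 2 ≤ lam) (hα : 0 < α) (t : ℝ) (ht : 0 ≤ t) :
    ∫ u in (0 : ℝ)..t,
      (α / (lam * (lam - 1))) * u ^ (α - 1) * (lam + u ^ α / lam - 2) *
        Real.exp (-(u ^ α / lam))
      = 1 - (1 / (lam - 1)) * (lam - 1 + t ^ α / lam) * Real.exp (-(t ^ α / lam)) := by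
  have hlam0 : (0:ℝ) < lam := lt_of_lt_of_le two_pos hlam
  have hlam1 : lam - 1 ≠ 0 := by linarith
  have hlamne : lam ≠ 0 := hlam0.ne'
  set F : ℝ → ℝ := fun u =>
    1 - (1 / (lam - 1)) * (lam - 1 + u ^ α / lam) * Real.exp (-(u ^ α / lam)) with hF
  have hF0 : F 0 = 0 := by
    simp [hF, Real.zero_rpow hα.ne']
    field_simp
    norm_num
  have hFcont : Continuous F := by
    have hrp : Continuous fun u : ℝ => u ^ α := Real.continuous_rpow_const hα.le
    have h1 : Continuous fun u : ℝ => u ^ α / lam := hrp.div_const lam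
    fun_prop
  rcases eq_or_lt_of_le ht with h0 | h0
  · rw [← h0]
    simp [Real.zero_rpow hα.ne']
    field_simp
    norm_num
  · have key := intervalIntegral.integral_eq_sub_of_hasDeriv_right_of_le ht
      (f := F)
      (f' := fun u => (α / (lam * (lam - 1))) * u ^ (α - 1) * (lam + u ^ α / lam - 2) *
        Real.exp (-(u ^ α / lam)))
      (hFcont.continuousOn)
      (fun x hx => by
        have hx0 : (0:ℝ) < x := hx.1
        have hg : HasDerivAt (fun u : ℝ => u ^ α / lam) (α * x ^ (α - 1) / lam) x :=
          (Real.hasDerivAt_rpow_const (Or.inl hx0.ne')).div_const lam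
        have he : HasDerivAt (fun u : ℝ => Real.exp (-(u ^ α / lam)))
            (-(α * x ^ (α - 1) / lam) * Real.exp (-(x ^ α / lam))) x := by
          simpa [mul_comm] using (hg.neg).exp
        have hp : HasDerivAt (fun u : ℝ => lam - 1 + u ^ α / lam)
            (α * x ^ (α - 1) / lam) x := hg.const_add _
        have hmul := hp.mul he
        have hfull := ((hmul.const_mul (1 / (lam - 1))).const_sub 1)
        have hFeq : F = fun u : ℝ =>
            1 - 1 / (lam - 1) * ((lam - 1 + u ^ α / lam) * Real.exp (-(u ^ α / lam))) := by
          funext u; rw [hF]; ring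
        have hDeq : (α / (lam * (lam - 1))) * x ^ (α - 1) * (lam + x ^ α / lam - 2) *
            Real.exp (-(x ^ α / lam)) =
            -(1 / (lam - 1) *
              (α * x ^ (α - 1) / lam * Real.exp (-(x ^ α / lam)) +
                (lam - 1 + x ^ α / lam) *
                  (-(α * x ^ (α - 1) / lam) * Real.exp (-(x ^ α / lam))))) := by
          field_simp
          ring
        rw [hFeq]
        simpa only [hDeq, Pi.mul_apply] using hfull.hasDerivWithinAt)
      (by
        have hint : IntervalIntegrable (fun u : ℝ => u ^ (α - 1)) volume 0 t :=
          intervalIntegral.intervalIntegrable_rpow' (by linarith)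
        have hcg : Continuous fun u : ℝ =>
            (α / (lam * (lam - 1))) * (lam + u ^ α / lam - 2) * Real.exp (-(u ^ α / lam)) := by
          have hrp : Continuous fun u : ℝ => u ^ α := Real.continuous_rpow_const hα.le
          have h1 : Continuous fun u : ℝ => u ^ α / lam := hrp.div_const lam
          fun_prop
        have := hint.continuousOn_mul hcg.continuousOn
        refine this.congr ?_
        intro u _
        dsimp only
        ring)
    rw [key, hF0, sub_zero]
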